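/- Let p ≥ 2, let a_1,...,a_p be positive reals, let x_max = max a_i, let α ∈ (1,2), and let H = {i : a_i ≥ x_max/α} and L = [p] \ H. Consider the sequence X = a_1,...,a_p followed by (|L|+1)·⌈2x_max/α⌉ ones. Then every partition of X into p contiguous blocks has some block of total weight at least 2x_max/α. -/

import Mathlib

open Finset

private lemma sum_card_Ico_filter (t : ℕ → ℕ) (ht : Monotone t) (P : ℕ → Prop)
    [DecidablePred P] (n : ℕ) :
    ∑ j ∈ Finset.range n, ((Finset.Ico (t j) (t (j+1))).filter P).card
      = ((Finset.Ico (t 0) (t n)).filter P).card := by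
  induction n with
  | zero => simp
  | succ n ih =>
    rw [Finset.sum_range_succ, ih, ← Finset.card_union_of_disjoint
        (Finset.disjoint_filter_filter (Finset.Ico_disjoint_Ico_consecutive _ _ _)),
        ← Finset.filter_union,
        Finset.Ico_union_Ico_eq_Ico (ht (Nat.zero_le n)) (ht (Nat.le_succ n))]

/-- Appending `(|L|+1)·⌈2x_max/α⌉` unit requests to `a_1, …, a_p` forces every partition into
`p` contiguous blocks to have some block of total weight at least `2x_max/α`. -/
theorem appended_ones_force_heavy_block (p : ℕ) (hp : 2 ≤ p) (a : Fin p → ℝ)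
    (hpos : ∀ i, 0 < a i) (α xmax : ℝ) (hα : α ∈ Set.Ioo (1:ℝ) 2)
    (hub : ∀ i, a i ≤ xmax) (hmem : ∃ i, a i = xmax) :
    ∀ s : Fin (p + 1) → ℕ, Monotone s → s 0 = 0 →
      s (Fin.last p) =
        p + ((Finset.univ.filter fun i => a i < xmax / α).card + 1) * ⌈2 * xmax / α⌉₊ →
      ∃ j : Fin p, 2 * xmax / α ≤
        ∑ i ∈ Finset.Ico (s j.castSucc) (s j.succ),
          (if h : i < p then a ⟨i, h⟩ else 1) := by
  intro s hmono hs0 hslast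
  by_contra hcon
  push_neg at hcon
  set X : ℕ → ℝ := fun i => if h : i < p then a ⟨i, h⟩ else 1 with hX
  obtain ⟨i0, hi0⟩ := hmem
  have hxpos : 0 < xmax := hi0 ▸ hpos i0
  obtain ⟨hα1, hα2⟩ := hα
  have hαpos : 0 < α := by linarith
  have hTpos : 0 < 2 * xmax / α := by positivity
  set m := ⌈2 * xmax / α⌉₊ with hm
  have hm1 : 1 ≤ m := Nat.one_le_ceil_iff.mpr hTpos
  have hTm : 2 * xmax / α ≤ (m : ℝ) := Nat.le_ceil _
  set Lc := (Finset.univ.filter fun i => a i < xmax / α).card with hLc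
  have hXpos : ∀ i, 0 < X i := by
    intro i; simp only [hX]; split
    · exact hpos _
    · norm_num
  have hXone : ∀ i, p ≤ i → X i = 1 := by
    intro i hi; simp only [hX]; rw [dif_neg]; omega
  have hXval : ∀ i : Fin p, X (i : ℕ) = a i := by
    intro i; simp only [hX]; rw [dif_pos i.isLt]
  -- number of appended ones in block j
  set ones : Fin p → ℕ :=
    fun j => ((Finset.Ico (s j.castSucc) (s j.succ)).filter (fun i => p ≤ i)).card with hones
  have hub' : ∀ j, (ones j : ℝ) ≤ ∑ i ∈ Finset.Ico (s j.castSucc) (s j.succ), X i := by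
    intro j
    calc (ones j : ℝ)
        = ∑ i ∈ (Finset.Ico (s j.castSucc) (s j.succ)).filter (fun i => p ≤ i), X i := by
          rw [Finset.sum_congr rfl (fun i hi => hXone i (Finset.mem_filter.mp hi).2),
            Finset.sum_const, nsmul_eq_mul, mul_one]
      _ ≤ _ := Finset.sum_le_sum_of_subset_of_nonneg (Finset.filter_subset _ _)
          (fun i _ _ => (hXpos i).le)
  have honeslt : ∀ j, ones j ≤ m - 1 := by
    intro j
    have h1 : (ones j : ℝ) < (m : ℝ) := lt_of_le_of_lt (hub' j) (lt_of_lt_of_le (hcon j) hTm)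
    have h2 : ones j < m := by exact_mod_cast h1
    omega
  -- total number of ones
  have hTotal : ∑ j : Fin p, ones j = (Lc + 1) * m := by
    set t : ℕ → ℕ := fun k => s ⟨min k p, by omega⟩ with ht
    have htmono : Monotone t := by
      intro x y hxy
      exact hmono (by simp [Fin.le_def]; omega)
    have hstep : ∀ j : Fin p, ones j = ((Finset.Ico (t (j : ℕ)) (t ((j : ℕ)+1))).filter
        (fun i => p ≤ i)).card := by
      intro j
      have hj := j.isLt
      have h1 : t (j : ℕ) = s j.castSucc := by
        simp only [ht]; congr 1
        apply Fin.ext; simp only [Fin.coe_castSucc]; omega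
      have h2 : t ((j : ℕ)+1) = s j.succ := by
        simp only [ht]; congr 1
        apply Fin.ext; simp only [Fin.val_succ]; omega
      rw [hones, h1, h2]
    calc ∑ j : Fin p, ones j
        = ∑ j ∈ Finset.range p, ((Finset.Ico (t j) (t (j+1))).filter (fun i => p ≤ i)).card := by
          rw [← Fin.sum_univ_eq_sum_range (fun k => ((Finset.Ico (t k) (t (k+1))).filter
            (fun i => p ≤ i)).card) p]
          exact Finset.sum_congr rfl (fun j _ => hstep j)
      _ = ((Finset.Ico (t 0) (t p)).filter (fun i => p ≤ i)).card :=
          sum_card_Ico_filter t htmono _ p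
      _ = (Lc + 1) * m := by
          have h0 : t 0 = 0 := by
            simp only [ht]
            have : (⟨min 0 p, by omega⟩ : Fin (p+1)) = 0 := by ext; simp
            rw [this, hs0]
          have h1 : t p = p + (Lc + 1) * m := by
            simp only [ht]
            have : (⟨min p p, by omega⟩ : Fin (p+1)) = Fin.last p := by ext; simp
            rw [this, hslast]
          rw [h0, h1]
          have : (Finset.Ico 0 (p + (Lc + 1) * m)).filter (fun i => p ≤ i)
              = Finset.Ico p (p + (Lc + 1) * m) := by
            ext i; simp [Finset.mem_Ico, Finset.mem_filter]; omega
          rw [this, Nat.card_Ico]; omega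
  -- every index < p lies in some block
  have hblk : ∀ i : Fin p, ∃ j : Fin p, s j.castSucc ≤ (i : ℕ) ∧ (i : ℕ) < s j.succ := by
    intro i
    classical
    set F := Finset.univ.filter (fun k : Fin (p+1) => s k ≤ (i : ℕ)) with hF
    have hne : F.Nonempty := ⟨0, by simp [hF, hs0]⟩
    set j' := F.max' hne with hj'
    have hj'mem : j' ∈ F := F.max'_mem hne
    have hj'le : s j' ≤ (i : ℕ) := (Finset.mem_filter.mp hj'mem).2
    have hj'lt : (j' : ℕ) < p := by
      by_contra h
      have hlast : j' = Fin.last p := by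
        ext; simp only [Fin.val_last]; omega
      rw [hlast, hslast] at hj'le
      have := i.isLt
      have : 1 ≤ (Lc + 1) * m := Nat.one_le_iff_ne_zero.mpr (by positivity)
      omega
    refine ⟨⟨(j' : ℕ), hj'lt⟩, ?_, ?_⟩
    · have : (⟨(j' : ℕ), hj'lt⟩ : Fin p).castSucc = j' := by ext; simp
      rw [this]; exact hj'le
    · by_contra h
      push_neg at h
      have hmem' : (⟨(j' : ℕ), hj'lt⟩ : Fin p).succ ∈ F := by
        simp [hF]; exact h
      have := F.le_max' _ hmem'
      rw [← hj'] at this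
      have hcontra : (j' : ℕ) + 1 ≤ (j' : ℕ) := by
        simpa [Fin.le_def] using this
      omega
  choose blk hblk1 hblk2 using hblk
  -- heavy indices
  set H := Finset.univ.filter (fun i : Fin p => xmax / α ≤ a i) with hH
  have hHL : H.card + Lc = p := by
    have h := Finset.card_filter_add_card_filter_not
      (s := (Finset.univ : Finset (Fin p))) (p := fun i => xmax / α ≤ a i)
    simp only [Finset.card_univ, Fintype.card_fin] at h
    have e : (Finset.univ.filter fun i : Fin p => ¬ xmax / α ≤ a i)
        = (Finset.univ.filter fun i : Fin p => a i < xmax / α) := by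
      ext i; simp [not_le]
    rw [e] at h
    exact h
  set Q := Finset.univ.filter (fun j : Fin p => s j.castSucc < p) with hQ
  set P := Finset.univ.filter (fun j : Fin p => ¬ s j.castSucc < p) with hP
  have hPQ : Q.card + P.card = p := by
    have h := Finset.card_filter_add_card_filter_not
      (s := (Finset.univ : Finset (Fin p))) (p := fun j : Fin p => s j.castSucc < p)
    simp only [Finset.card_univ, Fintype.card_fin] at h
    exact h
  -- each block sees at most one heavy index
  have hQcard : H.card ≤ Q.card := by
    apply Finset.card_le_card_of_injOn blk
    · intro i hi
      have hmem' : blk i ∈ Q := by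
        refine Finset.mem_filter.mpr ⟨Finset.mem_univ _, ?_⟩
        have := hblk1 i
        have := i.isLt
        omega
      exact Finset.mem_coe.mpr hmem'
    · intro i1 hi1 i2 hi2 heq
      by_contra hne
      have hne' : (i1 : ℕ) ≠ (i2 : ℕ) := fun h => hne (Fin.ext h)
      have hm2 : (i2 : ℕ) ∈ Finset.Ico (s (blk i1).castSucc) (s (blk i1).succ) := by
        rw [heq]; exact Finset.mem_Ico.mpr ⟨hblk1 i2, hblk2 i2⟩
      have hm1' : (i1 : ℕ) ∈ Finset.Ico (s (blk i1).castSucc) (s (blk i1).succ) :=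
        Finset.mem_Ico.mpr ⟨hblk1 i1, hblk2 i1⟩
      have hsub : ({(i1 : ℕ), (i2 : ℕ)} : Finset ℕ)
          ⊆ Finset.Ico (s (blk i1).castSucc) (s (blk i1).succ) := by
        intro x hx
        simp only [Finset.mem_insert, Finset.mem_singleton] at hx
        rcases hx with h | h <;> subst h <;> assumption
      have hpair : a i1 + a i2
          ≤ ∑ i ∈ Finset.Ico (s (blk i1).castSucc) (s (blk i1).succ), X i := by
        have h := Finset.sum_le_sum_of_subset_of_nonneg hsub (fun i _ _ => (hXpos i).le)
        rwa [Finset.sum_pair hne', hXval i1, hXval i2] at h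
      have hh1 : xmax / α ≤ a i1 := by
        have : i1 ∈ H := Finset.mem_coe.mp hi1
        exact (Finset.mem_filter.mp this).2
      have hh2 : xmax / α ≤ a i2 := by
        have : i2 ∈ H := Finset.mem_coe.mp hi2
        exact (Finset.mem_filter.mp this).2
      have hT2 : 2 * xmax / α = xmax / α + xmax / α := by ring
      have := hcon (blk i1)
      linarith
  -- at most one block starting before p contains ones
  have hQsum : ∑ j ∈ Q, ones j ≤ m - 1 := by
    have key : ∀ b c : Fin p, b < c → 0 < ones b → c ∈ Q → False := by
      intro b c hbc hb hcQ
      have hbne : ((Finset.Ico (s b.castSucc) (s b.succ)).filter (fun i => p ≤ i)).Nonempty :=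
        Finset.card_pos.mp hb
      obtain ⟨x, hx⟩ := hbne
      simp only [Finset.mem_filter, Finset.mem_Ico] at hx
      have h1 : p < s b.succ := by omega
      have h2 : s b.succ ≤ s c.castSucc := hmono (by
        simp [Fin.le_def]
        exact hbc)
      have h3 : s c.castSucc < p := (Finset.mem_filter.mp hcQ).2
      omega
    by_cases hex : ∃ j ∈ Q, 0 < ones j
    · obtain ⟨j0, hj0Q, hj0⟩ := hex
      have hsum : ∑ j ∈ Q, ones j = ones j0 := by
        apply Finset.sum_eq_single_of_mem j0 hj0Q
        intro b hbQ hbne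
        by_contra hb
        have hb' : 0 < ones b := Nat.pos_of_ne_zero hb
        rcases lt_or_gt_of_ne hbne with h | h
        · exact key b j0 h hb' hj0Q
        · exact key j0 b h hj0 hbQ
      rw [hsum]; exact honeslt j0
    · push_neg at hex
      have : ∑ j ∈ Q, ones j = 0 := Finset.sum_eq_zero (fun j hj => by
        have := hex j hj; omega)
      omega
  have hPsum : ∑ j ∈ P, ones j ≤ P.card * (m - 1) := by
    calc ∑ j ∈ P, ones j ≤ ∑ _j ∈ P, (m - 1) :=
      Finset.sum_le_sum (fun j _ => honeslt j)
    _ = P.card * (m - 1) := by rw [Finset.sum_const, smul_eq_mul]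
  have hsplit : ∑ j ∈ Q, ones j + ∑ j ∈ P, ones j = (Lc + 1) * m := by
    rw [hQ, hP, Finset.sum_filter_add_sum_filter_not, hTotal]
  have hPle : P.card ≤ Lc := by omega
  have hfinal : (Lc + 1) * m ≤ (Lc + 1) * (m - 1) := by
    calc (Lc + 1) * m = ∑ j ∈ Q, ones j + ∑ j ∈ P, ones j := hsplit.symm
      _ ≤ (m - 1) + P.card * (m - 1) := Nat.add_le_add hQsum hPsum
      _ ≤ (m - 1) + Lc * (m - 1) := by
          exact Nat.add_le_add_left (Nat.mul_le_mul_right _ hPle) _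
      _ = (Lc + 1) * (m - 1) := by ring
  have := Nat.le_of_mul_le_mul_left hfinal (by omega : 0 < Lc + 1)
  omega
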